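/- Let Q ⊆ ℝ^d be a nonempty compact convex set, N a norm on ℝ^d with dual norm N*(z) = sup{⟨z,x⟩ : N(x) ≤ 1}, σ > 0, ρ > 0, and let ω : Q → ℝ be (1/σ)-strongly convex with respect to N (for all x, y ∈ Q and every vector g with ω(z) ≥ ω(x) + ⟨g, z−x⟩ for all z ∈ Q, one has ω(y) − ω(x) − ⟨g, y−x⟩ ≥ (1/(2σ))·N(y−x)²). Fix z₀ ∈ ℝ^d, let y₀ ∈ Q maximize y ↦ ⟨z₀, y⟩ − ω(y) over Q, and let D ≥ sup_{y ∈ Q} (ω(y) − ω(y₀) − ⟨z₀, y − y₀⟩). Let f : Q → ℝ be convex, let T be a positive integer, set η = √(2D/(T·σ·ρ²)), and define sequences by: y_t maximizes y ↦ ⟨z_t, y⟩ − ω(y) over Q, g_t satisfies f(y) ≥ f(y_t) + ⟨g_t, y − y_t⟩ for all y ∈ Q and N*(g_t) ≤ ρ, and z_{t+1} = z_t − η·g_t, for t = 0, 1, …, T−1. Then for every y ∈ Q, (1/T)·Σ_{t=0}^{T−1} ⟨g_t, y_t − y⟩ ≤ √(2·D·σ·ρ²/T). In particular, if T ≥ 2·D·σ·ρ²/ε²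 then (1/T)·Σ_{t=0}^{T−1} ⟨g_t, y_t − y⟩ ≤ ε for all y ∈ Q. -/

import Mathlib

open Finset

/-- The standard inner product on `ℝ^d`. -/
noncomputable def dotp {d : ℕ} (x y : Fin d → ℝ) : ℝ := ∑ i, x i * y i

/-- The dual norm `N*(z) = sup {⟨z,x⟩ : N(x) ≤ 1}`. -/
noncomputable def dualNorm {d : ℕ} (N : (Fin d → ℝ) → ℝ) (z : Fin d → ℝ) : ℝ :=
  sSup ((fun x => dotp z x) '' {x | N x ≤ 1})


lemma dotp_smul_right {d : ℕ} (c : ℝ) (u v : Fin d → ℝ) : dotp u (c • v) = c * dotp u v := by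
  simp only [dotp, Finset.mul_sum, Pi.smul_apply, smul_eq_mul]
  exact Finset.sum_congr rfl fun i _ => by ring

lemma dotp_sub_right {d : ℕ} (u a b : Fin d → ℝ) : dotp u (a - b) = dotp u a - dotp u b := by
  simp [dotp, mul_sub, Finset.sum_sub_distrib]

lemma dotp_sub_left {d : ℕ} (a b u : Fin d → ℝ) : dotp (a - b) u = dotp a u - dotp b u := by
  simp [dotp, sub_mul, Finset.sum_sub_distrib]

lemma dotp_smul_left {d : ℕ} (c : ℝ) (u v : Fin d → ℝ) : dotp (c • u) v = c * dotp u v := by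
  simp only [dotp, Finset.mul_sum, Pi.smul_apply, smul_eq_mul]
  exact Finset.sum_congr rfl fun i _ => by ring

lemma dotp_zero_right {d : ℕ} (u : Fin d → ℝ) : dotp u 0 = 0 := by simp [dotp]


lemma dual_bound {d : ℕ} (N : (Fin d → ℝ) → ℝ)
    (hN0 : ∀ x, N x = 0 ↔ x = 0)
    (hNsmul : ∀ (a : ℝ) (x : Fin d → ℝ), N (a • x) = |a| * N x)
    (hNtri : ∀ x y, N (x + y) ≤ N x + N y)
    (g : Fin d → ℝ) (ρ : ℝ) (hdn : dualNorm N g ≤ ρ) (x : Fin d → ℝ) :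
    dotp g x ≤ ρ * N x := by
  have hN00 : N 0 = 0 := (hN0 0).mpr rfl
  have hNneg : ∀ v, N (-v) = N v := by
    intro v; have := hNsmul (-1) v; simpa using this
  have hNnn : ∀ v, 0 ≤ N v := by
    intro v
    have := hNtri v (-v)
    simp [hN00, hNneg] at this
    linarith
  rcases eq_or_ne x 0 with rfl | hx
  · simp [dotp, hN00]
  · have hxn : 0 < N x := (hNnn x).lt_of_ne (fun h => hx ((hN0 x).mp h.symm))
    -- N of a sum is at most sum of N's
    have hNsum : ∀ (s : Finset (Fin d)) (v : Fin d → Fin d → ℝ),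
        N (∑ i ∈ s, v i) ≤ ∑ i ∈ s, N (v i) := by
      intro s v
      induction s using Finset.induction_on with
      | empty => simp [hN00]
      | insert _ _ hnotmem ih =>
        rw [Finset.sum_insert hnotmem, Finset.sum_insert hnotmem]
        exact le_trans (hNtri _ _) (by linarith)
    -- upper bound : N v ≤ C * ‖v‖
    set e : Fin d → Fin d → ℝ := fun i j => if j = i then 1 else 0 with he
    have hdecomp : ∀ v : Fin d → ℝ, v = ∑ i, v i • e i := by
      intro v; funext j
      simp [e, Finset.sum_apply, mul_ite]
    set C : ℝ := ∑ i, N (e i) with hC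
    have hub : ∀ v : Fin d → ℝ, N v ≤ C * ‖v‖ := by
      intro v
      calc N v = N (∑ i, v i • e i) := by rw [← hdecomp]
        _ ≤ ∑ i, N (v i • e i) := hNsum _ _
        _ = ∑ i, |v i| * N (e i) := by simp [hNsmul]
        _ ≤ ∑ i, ‖v‖ * N (e i) := by
            apply Finset.sum_le_sum
            intro i _
            exact mul_le_mul_of_nonneg_right (by simpa [Real.norm_eq_abs] using norm_le_pi_norm v i) (hNnn _)
        _ = C * ‖v‖ := by
            rw [hC, Finset.sum_mul]
            exact Finset.sum_congr rfl fun i _ => mul_comm _ _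
    have hcont : Continuous N := by
      have hlip : LipschitzWith (Real.toNNReal C) N := by
        apply LipschitzWith.of_dist_le_mul
        intro a b
        have h1 : N a ≤ N b + N (a - b) := by
          have := hNtri b (a - b); simpa using this
        have h2 : N b ≤ N a + N (b - a) := by
          have := hNtri a (b - a); simpa using this
        have h3 : N (a - b) ≤ C * ‖a - b‖ := hub _
        have h4 : N (b - a) ≤ C * ‖b - a‖ := hub _
        have hC0 : 0 ≤ C * ‖a - b‖ := le_trans (hNnn _) h3
        have hCle : C * ‖a - b‖ ≤ (Real.toNNReal C) * ‖a - b‖ :=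
          mul_le_mul_of_nonneg_right (Real.le_coe_toNNReal C) (norm_nonneg _)
        rw [Real.dist_eq, dist_eq_norm, abs_sub_le_iff]
        constructor
        · calc N a - N b ≤ N (a - b) := by linarith
            _ ≤ _ := le_trans h3 hCle
        · calc N b - N a ≤ N (b - a) := by linarith
            _ ≤ C * ‖a - b‖ := by rwa [← norm_sub_rev a b] at h4
            _ ≤ _ := hCle
      exact hlip.continuous
    -- lower bound via compactness of the sphere
    have hxnorm : ‖x‖ ≠ 0 := norm_ne_zero_iff.mpr hx
    have hsph : (Metric.sphere (0 : Fin d → ℝ) 1).Nonempty := by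
      refine ⟨‖x‖⁻¹ • x, ?_⟩
      simp [norm_smul, abs_of_nonneg (inv_nonneg.mpr (norm_nonneg x)),
        inv_mul_cancel₀ hxnorm]
    obtain ⟨u0, hu0mem, hu0min⟩ :=
      (isCompact_sphere (0 : Fin d → ℝ) 1).exists_isMinOn hsph hcont.continuousOn
    have hu0norm : ‖u0‖ = 1 := by simpa using hu0mem
    have hu0ne : u0 ≠ 0 := by
      intro h; rw [h] at hu0norm; simp at hu0norm
    set c : ℝ := N u0 with hc
    have hcpos : 0 < c := (hNnn u0).lt_of_ne (fun h => hu0ne ((hN0 u0).mp h.symm))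
    have hlow : ∀ v : Fin d → ℝ, c * ‖v‖ ≤ N v := by
      intro v
      rcases eq_or_ne v 0 with rfl | hv
      · simp [hN00]
      · have hvn : ‖v‖ ≠ 0 := norm_ne_zero_iff.mpr hv
        have hmem : ‖v‖⁻¹ • v ∈ Metric.sphere (0 : Fin d → ℝ) 1 := by
          simp [norm_smul, abs_of_nonneg (inv_nonneg.mpr (norm_nonneg v)),
            inv_mul_cancel₀ hvn]
        have := hu0min hmem
        have h1 : c ≤ N (‖v‖⁻¹ • v) := this
        have h2 : N (‖v‖⁻¹ • v) = ‖v‖⁻¹ * N v := by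
          rw [hNsmul, abs_of_nonneg (inv_nonneg.mpr (norm_nonneg v))]
        rw [h2] at h1
        have : c * ‖v‖ ≤ (‖v‖⁻¹ * N v) * ‖v‖ :=
          mul_le_mul_of_nonneg_right h1 (norm_nonneg v)
        rwa [mul_assoc, mul_comm (N v), ← mul_assoc, inv_mul_cancel₀ hvn, one_mul] at this
    -- bounded above
    have hbdd : BddAbove ((fun x => dotp g x) '' {x | N x ≤ 1}) := by
      refine ⟨(∑ i, |g i|) * c⁻¹, ?_⟩
      rintro p ⟨u, hu, rfl⟩
      have hun : ‖u‖ ≤ c⁻¹ := by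
        have h := le_trans (hlow u) hu
        calc ‖u‖ = c⁻¹ * (c * ‖u‖) := by field_simp
          _ ≤ c⁻¹ * 1 := mul_le_mul_of_nonneg_left h (inv_nonneg.mpr hcpos.le)
          _ = c⁻¹ := mul_one _
      calc dotp g u ≤ ∑ i, |g i| * ‖u‖ := by
            apply Finset.sum_le_sum
            intro i _
            calc g i * u i ≤ |g i * u i| := le_abs_self _
              _ = |g i| * |u i| := abs_mul _ _
              _ ≤ |g i| * ‖u‖ := mul_le_mul_of_nonneg_left
                  (by simpa [Real.norm_eq_abs] using norm_le_pi_norm u i) (abs_nonneg _)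
        _ = (∑ i, |g i|) * ‖u‖ := by rw [Finset.sum_mul]
        _ ≤ (∑ i, |g i|) * c⁻¹ := mul_le_mul_of_nonneg_left hun
            (Finset.sum_nonneg fun i _ => abs_nonneg _)
    -- conclude
    set u : Fin d → ℝ := (N x)⁻¹ • x with hu
    have hNu : N u = 1 := by
      rw [hu, hNsmul, abs_of_nonneg (inv_nonneg.mpr hxn.le), inv_mul_cancel₀ hxn.ne']
    have hmem : dotp g u ∈ (fun x => dotp g x) '' {x | N x ≤ 1} :=
      ⟨u, by simp [hNu], rfl⟩
    have hle : dotp g u ≤ ρ := le_trans (le_csSup hbdd hmem) hdn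
    have hgu : dotp g u = (N x)⁻¹ * dotp g x := by rw [hu, dotp_smul_right]
    rw [hgu] at hle
    have := mul_le_mul_of_nonneg_left hle hxn.le
    rw [← mul_assoc, mul_inv_cancel₀ hxn.ne', one_mul] at this
    linarith

/-- **Mirror Descent regret guarantee** (Theorem 2.2 of the paper): running Mirror
Descent with a `(1/σ)`-strongly convex mirror map `ω` on a convex function `f` with
subgradients of dual norm at most `ρ`, with step `η = √(2D/(Tσρ²))`, gives
`(1/T)·Σ_t ⟨g_t, y_t - y⟩ ≤ √(2Dσρ²/T)` for all `y ∈ Q`; in particular the average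
regret is at most `ε` once `T ≥ 2Dσρ²/ε²`. -/
theorem mirror_descent_regret
    (d : ℕ) (Q : Set (Fin d → ℝ)) (hQne : Q.Nonempty) (hQcomp : IsCompact Q)
    (hQconv : Convex ℝ Q)
    (N : (Fin d → ℝ) → ℝ)
    (hN0 : ∀ x, N x = 0 ↔ x = 0)
    (hNsmul : ∀ (a : ℝ) (x : Fin d → ℝ), N (a • x) = |a| * N x)
    (hNtri : ∀ x y, N (x + y) ≤ N x + N y)
    (σ ρ : ℝ) (hσ : 0 < σ) (hρ : 0 < ρ)
    (ω : (Fin d → ℝ) → ℝ)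
    (hstrong : ∀ x ∈ Q, ∀ y ∈ Q, ∀ g : Fin d → ℝ,
      (∀ z ∈ Q, ω x + dotp g (z - x) ≤ ω z) →
      (1 / (2 * σ)) * N (y - x) ^ 2 ≤ ω y - ω x - dotp g (y - x))
    (f : (Fin d → ℝ) → ℝ) (hf : ConvexOn ℝ Q f)
    (T : ℕ) (hT : 0 < T)
    (D : ℝ)
    (η : ℝ) (hη : η = Real.sqrt (2 * D / (T * σ * ρ ^ 2)))
    (y z g : ℕ → Fin d → ℝ)
    (hymax : ∀ t < T, y t ∈ Q ∧
      ∀ y' ∈ Q, dotp (z t) y' - ω y' ≤ dotp (z t) (y t) - ω (y t))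
    (hD : ∀ y' ∈ Q, ω y' - ω (y 0) - dotp (z 0) (y' - y 0) ≤ D)
    (hg : ∀ t < T, (∀ y' ∈ Q, f (y t) + dotp (g t) (y' - y t) ≤ f y') ∧
      dualNorm N (g t) ≤ ρ)
    (hz : ∀ t < T, z (t + 1) = z t - η • g t) :
    (∀ y' ∈ Q, (1 / (T : ℝ)) * ∑ t ∈ Finset.range T, dotp (g t) (y t - y') ≤
        Real.sqrt (2 * D * σ * ρ ^ 2 / T)) ∧
    (∀ ε : ℝ, 0 < ε → 2 * D * σ * ρ ^ 2 / ε ^ 2 ≤ (T : ℝ) →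
      ∀ y' ∈ Q, (1 / (T : ℝ)) * ∑ t ∈ Finset.range T, dotp (g t) (y t - y') ≤ ε) := by
  obtain ⟨hy0Q, hy0max⟩ := hymax 0 hT
  have hD0 : 0 ≤ D := by have := hD (y 0) hy0Q; simpa [dotp] using this
  have hη0 : 0 ≤ η := hη ▸ Real.sqrt_nonneg _
  have hN00 : N 0 = 0 := (hN0 0).mpr rfl
  have hNneg : ∀ v, N (-v) = N v := by intro v; simpa using hNsmul (-1) v
  have hNnn : ∀ v, 0 ≤ N v := by
    intro v; have := hNtri v (-v); simp [hN00, hNneg] at this; linarith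
  have hTpos : (0 : ℝ) < T := by exact_mod_cast hT
  have hsub : ∀ t, t < T → ∀ w ∈ Q,
      (1 / (2 * σ)) * N (w - y t) ^ 2 ≤ ω w - ω (y t) - dotp (z t) (w - y t) := by
    intro t ht w hw
    obtain ⟨hyQ, hmax⟩ := hymax t ht
    refine hstrong (y t) hyQ w hw (z t) (fun z' hz' => ?_)
    have := hmax z' hz'
    rw [dotp_sub_right]
    linarith
  have hdual' : ∀ t, t < T → ∀ v, dotp (g t) v ≤ ρ * N v := fun t ht v =>
    dual_bound N hN0 hNsmul hNtri (g t) ρ (hg t ht).2 v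
  have main : ∀ y' ∈ Q, (1 / (T : ℝ)) * ∑ t ∈ Finset.range T, dotp (g t) (y t - y') ≤
      Real.sqrt (2 * D * σ * ρ ^ 2 / T) := by
    intro y' hy'
    rcases eq_or_lt_of_le hD0 with hDeq | hDpos
    · -- D = 0 : Q is a singleton
      have hQsingle : ∀ q ∈ Q, q = y 0 := by
        intro q hq
        have h1 := hsub 0 hT q hq
        have h2 := hD q hq
        have hpos : (0 : ℝ) < 1 / (2 * σ) := by positivity
        have h3 : N (q - y 0) ^ 2 ≤ 0 := by nlinarith
        have h4 : N (q - y 0) = 0 := by nlinarith [hNnn (q - y 0)]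
        exact sub_eq_zero.mp ((hN0 _).mp h4)
      have hsum : ∑ t ∈ Finset.range T, dotp (g t) (y t - y') = 0 := by
        refine Finset.sum_eq_zero fun t ht => ?_
        rw [Finset.mem_range] at ht
        have hyt : y t - y' = 0 := by
          rw [hQsingle (y t) (hymax t ht).1, hQsingle y' hy', sub_self]
        rw [hyt]; simp [dotp]
      rw [hsum, mul_zero]
      exact Real.sqrt_nonneg _
    · -- D > 0
      set W : ℕ → ℝ := fun t => if t = T then 0 else ω y' - ω (y t) - dotp (z t) (y' - y t)
        with hW
      set Cs : ℝ := σ * η ^ 2 * ρ ^ 2 / 2 with hCs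
      have step : ∀ t, t < T → η * dotp (g t) (y t - y') ≤ W t - W (t + 1) + Cs := by
        intro t ht
        set w : Fin d → ℝ := if t + 1 = T then y' else y (t + 1) with hw
        have hwQ : w ∈ Q := by
          rw [hw]; split_ifs with h
          · exact hy'
          · exact (hymax (t + 1) (lt_of_le_of_ne (Nat.succ_le_of_lt ht) h)).1
        have hWt : W t = ω y' - ω (y t) - dotp (z t) (y' - y t) := by
          simp only [hW, if_neg ht.ne]
        have hWt1 : W (t + 1) = ω y' - ω w - dotp (z (t + 1)) (y' - w) := by
          simp only [hW, hw]
          by_cases h : t + 1 = T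
          · rw [if_pos h, if_pos h]; simp [dotp]
          · rw [if_neg h, if_neg h]
        have hB := hsub t ht w hwQ
        have hgw : dotp (g t) (y t - w) ≤ ρ * N (w - y t) := by
          have h := hdual' t ht (y t - w)
          have hNe : N (y t - w) = N (w - y t) := by
            rw [← hNneg (w - y t)]; congr 1; ring
          rwa [hNe] at h
        have hquad : η * (ρ * N (w - y t)) - (1 / (2 * σ)) * N (w - y t) ^ 2 ≤ Cs := by
          set a := N (w - y t) with ha
          have h1 : (0 : ℝ) ≤ (1 / (2 * σ)) * (a - σ * η * ρ) ^ 2 := by positivity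
          have key : η * (ρ * a) - (1 / (2 * σ)) * a ^ 2 - σ * η ^ 2 * ρ ^ 2 / 2
              = -((1 / (2 * σ)) * (a - σ * η * ρ) ^ 2) := by
            field_simp
            ring
          rw [hCs]
          linarith [key, h1]
        have hid : η * dotp (g t) (y t - y') =
            (ω y' - ω (y t) - dotp (z t) (y' - y t))
            - (ω y' - ω w - dotp (z (t + 1)) (y' - w))
            - (ω w - ω (y t) - dotp (z t) (w - y t))
            + η * dotp (g t) (y t - w) := by
          rw [hz t ht]
          simp only [dotp_sub_left, dotp_smul_left, dotp_sub_right]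
          ring
        have h5 : η * dotp (g t) (y t - w) ≤ η * (ρ * N (w - y t)) :=
          mul_le_mul_of_nonneg_left hgw hη0
        rw [hWt, hWt1]
        linarith
      have hsum1 : η * ∑ t ∈ Finset.range T, dotp (g t) (y t - y') ≤ D + T * Cs := by
        rw [Finset.mul_sum]
        calc ∑ t ∈ Finset.range T, η * dotp (g t) (y t - y')
            ≤ ∑ t ∈ Finset.range T, (W t - W (t + 1) + Cs) :=
              Finset.sum_le_sum fun t ht => step t (Finset.mem_range.mp ht)
          _ = (W 0 - W T) + T * Cs := by
              rw [Finset.sum_add_distrib, Finset.sum_range_sub', Finset.sum_const,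
                Finset.card_range, nsmul_eq_mul]
          _ ≤ D + T * Cs := by
              have hW0 : W 0 = ω y' - ω (y 0) - dotp (z 0) (y' - y 0) := by
                simp only [hW, if_neg hT.ne]
              have hWT : W T = 0 := by simp only [hW, if_pos rfl]
              rw [hW0, hWT]
              have := hD y' hy'
              linarith
      have hden : (0 : ℝ) < (T : ℝ) * σ * ρ ^ 2 :=
        mul_pos (mul_pos hTpos hσ) (pow_pos hρ 2)
      have hηpos : 0 < η := by
        rw [hη]
        exact Real.sqrt_pos.mpr (div_pos (by linarith) hden)
      have hη2 : η ^ 2 = 2 * D / ((T : ℝ) * σ * ρ ^ 2) := by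
        rw [hη]; exact Real.sq_sqrt (le_of_lt (div_pos (by linarith) hden))
      have hTC : (T : ℝ) * Cs = D := by
        rw [hCs, hη2]
        field_simp
      set R : ℝ := Real.sqrt (2 * D * σ * ρ ^ 2 / T) with hR
      have hRmul : η * R = 2 * D / T := by
        have hprod : (2 * D / ((T : ℝ) * σ * ρ ^ 2)) * (2 * D * σ * ρ ^ 2 / T)
            = (2 * D / T) ^ 2 := by
          field_simp
        rw [hη, hR, ← Real.sqrt_mul (le_of_lt (div_pos (by linarith) hden)), hprod,
          Real.sqrt_sq (le_of_lt (div_pos (by linarith) hTpos))]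
      have hRmul2 : η * ((T : ℝ) * R) = 2 * D := by
        have h0 : η * ((T : ℝ) * R) = (T : ℝ) * (η * R) := by ring
        rw [h0, hRmul]
        field_simp
      have hS : ∑ t ∈ Finset.range T, dotp (g t) (y t - y') ≤ (T : ℝ) * R := by
        have h2 : η * ∑ t ∈ Finset.range T, dotp (g t) (y t - y') ≤ η * ((T : ℝ) * R) := by
          rw [hRmul2]
          linarith [hsum1, hTC]
        exact le_of_mul_le_mul_left h2 hηpos
      calc (1 / (T : ℝ)) * ∑ t ∈ Finset.range T, dotp (g t) (y t - y')
          ≤ (1 / (T : ℝ)) * ((T : ℝ) * R) :=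
            mul_le_mul_of_nonneg_left hS (by positivity)
        _ = R := by field_simp
  refine ⟨main, fun ε hε hTeps y' hy' => le_trans (main y' hy') ?_⟩
  have h1 : 2 * D * σ * ρ ^ 2 / (T : ℝ) ≤ ε ^ 2 := by
    rw [div_le_iff₀ hTpos]
    calc 2 * D * σ * ρ ^ 2 = (2 * D * σ * ρ ^ 2 / ε ^ 2) * ε ^ 2 := by field_simp
      _ ≤ (T : ℝ) * ε ^ 2 := mul_le_mul_of_nonneg_right hTeps (by positivity)
      _ = ε ^ 2 * (T : ℝ) := mul_comm _ _
  calc Real.sqrt (2 * D * σ * ρ ^ 2 / T) ≤ Real.sqrt (ε ^ 2) := Real.sqrt_le_sqrt h1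
    _ = ε := Real.sqrt_sq hε.le
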